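/- arXiv:1910.03186 — 2 statements merged into one kernel-verified Lean document; each statement's English description precedes it below -/
import Mathlib

section
/- In the quantum torus over ℂ(q) generated by P₁,P₂,P₃,X₁,X₂,X₃ with P_jX_j = q²X_jP_j and all other pairs commuting, the gl₃ Toda Hamiltonians H₁^{(3)} = P₁+P₂+P₃+P₂X₂X₁^{-1}+P₃X₃X₂^{-1} and H₂^{(3)} = P₁P₂+P₁P₃+P₂P₃+P₁P₃X₃X₂^{-1}+P₂P₃X₂X₁^{-1} commute: H₁^{(3)}H₂^{(3)} = H₂^{(3)}H₁^{(3)}. -/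
private lemma swap3 {A : Type*} [Ring A] {a b : A} (h : b * a = a * b) (t : A) :
    b * (a * t) = a * (b * t) := by rw [← mul_assoc, h, mul_assoc]

private lemma qswap3 {A : Type*} [Ring A] {q a b : A} (h : b * a = q * (a * b)) (t : A) :
    b * (a * t) = q * (a * (b * t)) := by rw [← mul_assoc, h, mul_assoc, mul_assoc]

private lemma qcent {A : Type*} [Ring A] {q : A} (hq : ∀ a : A, q * a = a * q) (z t : A) :
    z * (q ^ 2 * t) = q ^ 2 * (z * t) := by
  have key : z * q ^ 2 = q ^ 2 * z := by
    rw [pow_two, ← mul_assoc, ← hq z, mul_assoc, ← hq z, ← mul_assoc]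
  rw [← mul_assoc, key, mul_assoc]

private lemma inv_q_rel {A : Type*} [Ring A] {q P : A} {X : Aˣ}
    (hq : ∀ a : A, q * a = a * q) (h : P * (X : A) = q ^ 2 * ((X : A) * P)) :
    ((X⁻¹ : Aˣ) : A) * P = q ^ 2 * (P * ((X⁻¹ : Aˣ) : A)) := by
  calc ((X⁻¹ : Aˣ) : A) * P
      = ((X⁻¹ : Aˣ) : A) * (P * (X : A)) * ((X⁻¹ : Aˣ) : A) := by
        rw [mul_assoc, mul_assoc, Units.mul_inv, mul_one]
    _ = ((X⁻¹ : Aˣ) : A) * (q ^ 2 * ((X : A) * P)) * ((X⁻¹ : Aˣ) : A) := by rw [h]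
    _ = q ^ 2 * (P * ((X⁻¹ : Aˣ) : A)) := by
        rw [qcent hq, Units.inv_mul_cancel_left, mul_assoc]

/-- The `gl₃` quantum Toda Hamiltonians
`H₁ = P₁+P₂+P₃+P₂X₂X₁⁻¹+P₃X₃X₂⁻¹` and
`H₂ = P₁P₂+P₁P₃+P₂P₃+P₁P₃X₃X₂⁻¹+P₂P₃X₂X₁⁻¹` commute in the quantum torus with
`P_jX_j = q²X_jP_j` and all other pairs of generators commuting. -/
theorem stmt5 {A : Type*} [Ring A] (q : A) (hq : ∀ a : A, q * a = a * q)
    (P₁ P₂ P₃ : A) (X₁ X₂ X₃ : Aˣ)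
    (h1 : P₁ * (X₁ : A) = q ^ 2 * ((X₁ : A) * P₁))
    (h2 : P₂ * (X₂ : A) = q ^ 2 * ((X₂ : A) * P₂))
    (h3 : P₃ * (X₃ : A) = q ^ 2 * ((X₃ : A) * P₃))
    (c12 : Commute P₁ P₂) (c13 : Commute P₁ P₃) (c23 : Commute P₂ P₃)
    (c1x2 : Commute P₁ (X₂ : A)) (c1x3 : Commute P₁ (X₃ : A))
    (c2x1 : Commute P₂ (X₁ : A)) (c2x3 : Commute P₂ (X₃ : A))
    (c3x1 : Commute P₃ (X₁ : A)) (c3x2 : Commute P₃ (X₂ : A))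
    (cx12 : Commute (X₁ : A) (X₂ : A)) (cx13 : Commute (X₁ : A) (X₃ : A))
    (cx23 : Commute (X₂ : A) (X₃ : A)) :
    (P₁ + P₂ + P₃ + P₂ * (X₂ : A) * ((X₁⁻¹ : Aˣ) : A) + P₃ * (X₃ : A) * ((X₂⁻¹ : Aˣ) : A)) *
      (P₁ * P₂ + P₁ * P₃ + P₂ * P₃ + P₁ * P₃ * (X₃ : A) * ((X₂⁻¹ : Aˣ) : A) +
        P₂ * P₃ * (X₂ : A) * ((X₁⁻¹ : Aˣ) : A)) =
    (P₁ * P₂ + P₁ * P₃ + P₂ * P₃ + P₁ * P₃ * (X₃ : A) * ((X₂⁻¹ : Aˣ) : A) +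
        P₂ * P₃ * (X₂ : A) * ((X₁⁻¹ : Aˣ) : A)) *
      (P₁ + P₂ + P₃ + P₂ * (X₂ : A) * ((X₁⁻¹ : Aˣ) : A) + P₃ * (X₃ : A) * ((X₂⁻¹ : Aˣ) : A)) := by
  -- names for the generators as ring elements
  set y1 : A := ((X₁⁻¹ : Aˣ) : A) with hy1def
  set y2 : A := ((X₂⁻¹ : Aˣ) : A) with hy2def
  -- q-relations with inverses
  have hy1p1 : y1 * P₁ = q ^ 2 * (P₁ * y1) := inv_q_rel hq h1
  have hy2p2 : y2 * P₂ = q ^ 2 * (P₂ * y2) := inv_q_rel hq h2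
  -- commuting pairs, oriented to sort as x2 < x3 < P₁ < P₂ < P₃ < y1 < y2
  have s1 : (X₃ : A) * (X₂ : A) = (X₂ : A) * (X₃ : A) := cx23.symm.eq
  have s2 : P₁ * (X₂ : A) = (X₂ : A) * P₁ := c1x2.eq
  have s3 : P₁ * (X₃ : A) = (X₃ : A) * P₁ := c1x3.eq
  have s4 : P₂ * (X₃ : A) = (X₃ : A) * P₂ := c2x3.eq
  have s5 : P₃ * (X₂ : A) = (X₂ : A) * P₃ := c3x2.eq
  have s6 : P₂ * P₁ = P₁ * P₂ := c12.symm.eq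
  have s7 : P₃ * P₁ = P₁ * P₃ := c13.symm.eq
  have s8 : P₃ * P₂ = P₂ * P₃ := c23.symm.eq
  have s9 : y1 * (X₂ : A) = (X₂ : A) * y1 := (cx12.units_inv_left).eq
  have s10 : y1 * (X₃ : A) = (X₃ : A) * y1 := (cx13.units_inv_left).eq
  have s11 : y1 * P₂ = P₂ * y1 := (c2x1.units_inv_right).symm.eq
  have s12 : y1 * P₃ = P₃ * y1 := (c3x1.units_inv_right).symm.eq
  have s13 : y2 * (X₂ : A) = (X₂ : A) * y2 := by
    rw [hy2def, Units.inv_mul, Units.mul_inv]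
  have s14 : y2 * (X₃ : A) = (X₃ : A) * y2 := (cx23.units_inv_left).eq
  have s15 : y2 * P₁ = P₁ * y2 := (c1x2.units_inv_right).symm.eq
  have s16 : y2 * P₃ = P₃ * y2 := (c3x2.units_inv_right).symm.eq
  have s17 : y2 * y1 = y1 * y2 := ((cx12.units_inv_left).units_inv_right).symm.eq
  simp only [mul_add, add_mul, mul_assoc,
    h2, qswap3 h2, h3, qswap3 h3, hy1p1, qswap3 hy1p1, hy2p2, qswap3 hy2p2,
    s1, swap3 s1, s2, swap3 s2, s3, swap3 s3, s4, swap3 s4, s5, swap3 s5,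
    s6, swap3 s6, s7, swap3 s7, s8, swap3 s8, s9, swap3 s9, s10, swap3 s10,
    s11, swap3 s11, s12, swap3 s12, s13, swap3 s13, s14, swap3 s14,
    s15, swap3 s15, s16, swap3 s16, s17, swap3 s17,
    qcent hq (X₂ : A), qcent hq (X₃ : A), qcent hq P₁, qcent hq P₂, qcent hq P₃,
    qcent hq y1, qcent hq y2]
  abel
end

section
/- Pentagon identity consequence (algebraic form): in the quantum torus with UV = q²VU, the formal power series identity Ψ_q(U)Ψ_q(V) = Ψ_q(V)Ψ_q(q^{-1}UV)Ψ_q(U) holds, where Ψ_q(z) = ∏_{k=0}^∞ (1 + q^{2k+1} z)^{-1} is the compact quantum dilogarithm viewed as a formal power series in z. -/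
open Finset

section Pentagon

variable {K : Type*} [Field K] {q : K} {a : ℕ → K}

/-- extension of the coefficient sequence to `ℤ` by zero. -/
def pc (a : ℕ → K) : ℤ → K := fun t => if 0 ≤ t then a t.toNat else 0

lemma pc_natCast (a : ℕ → K) (n : ℕ) : pc a (n : ℤ) = a n := by
  simp [pc]

lemma pc_neg (a : ℕ → K) {t : ℤ} (h : t < 0) : pc a t = 0 := by
  simp [pc, not_le.mpr h]

/-- the key triple convolution sum -/
def pT (q : K) (a : ℕ → K) (m : ℕ) (n : ℤ) : K :=
  ∑ k ∈ range (m + 1), q ^ ((k : ℤ) ^ 2) * a k * pc a (n - k) * a (m - k)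

variable (hq : q ≠ 0) (ha0 : a 0 = 1)
  (harec : ∀ n : ℕ, a (n + 1) * (q ^ (2 * n + 2) - 1) = q * a n)

include hq harec in
lemma harecz (t : ℕ) : a (t + 1) * (q ^ (2 * (t : ℤ) + 2) - 1) = q * a t := by
  rw [show (2 * (t : ℤ) + 2) = ((2 * t + 2 : ℕ) : ℤ) by push_cast; ring, zpow_natCast]
  exact harec t

include hq ha0 harec in
lemma hane : ∀ n, a n ≠ 0 := by
  intro n
  induction n with
  | zero => rw [ha0]; exact one_ne_zero
  | succ k ih =>
    intro h
    have h2 := harec k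
    rw [h, zero_mul] at h2
    rcases mul_eq_zero.mp h2.symm with h3 | h3
    · exact hq h3
    · exact ih h3

include hq ha0 harec in
lemma hnez (m : ℕ) : q ^ (2 * (m : ℤ) + 2) - 1 ≠ 0 := by
  intro h
  have h2 := harecz hq harec m
  rw [h, mul_zero] at h2
  rcases mul_eq_zero.mp h2.symm with h3 | h3
  · exact hq h3
  · exact hane hq ha0 harec m h3

include hq harec in
lemma pc_rec (t : ℤ) : pc a (t + 1) * (q ^ (2 * t + 2) - 1) = q * pc a t := by
  rcases t with s | s
  · rw [show (Int.ofNat s + 1) = ((s + 1 : ℕ) : ℤ) by simp, pc_natCast,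
      show (Int.ofNat s) = ((s : ℕ) : ℤ) from rfl, pc_natCast]
    exact harecz hq harec s
  · rcases s with _ | s
    · rw [show Int.negSucc 0 = -1 from rfl]
      norm_num [pc]
    · have h1 : (Int.negSucc (s + 1)) = -((s : ℤ) + 2) := by
        rw [Int.negSucc_eq]; push_cast; ring
      rw [h1, pc_neg a (by omega), pc_neg a (by omega), zero_mul, mul_zero]


include hq ha0 harec in
lemma pT_step (m : ℕ) (n : ℤ) :
    pT q a (m + 1) n * (q ^ (2 * (m : ℤ) + 2) - 1)
      = q * pT q a m n + q ^ (2 * (m : ℤ) + 2) * pT q a m (n - 1) := by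
  set B : ℕ → K := fun k =>
    if k = 0 then 0 else
      q ^ ((k : ℤ) ^ 2 + 2 * ((m : ℤ) + 1 - k) + 1) * a (k - 1) * pc a (n - k) * a (m + 1 - k)
    with hB
  have hterm : ∀ k ∈ range (m + 1),
      (q ^ ((k : ℤ) ^ 2) * a k * pc a (n - k) * a (m + 1 - k)) * (q ^ (2 * (m : ℤ) + 2) - 1)
        = q * (q ^ ((k : ℤ) ^ 2) * a k * pc a (n - k) * a (m - k)) + B k := by
    intro k hk
    have hk' : k ≤ m := by simpa [Nat.lt_succ_iff] using hk
    obtain ⟨j, rfl⟩ : ∃ j, m = k + j := ⟨m - k, by omega⟩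
    rw [show k + j + 1 - k = j + 1 by omega, show k + j - k = j by omega]
    rcases k with _ | k'
    · simp only [hB, if_pos rfl]
      norm_num
      linear_combination (a 0 * pc a n) * harecz hq harec j
    · simp only [hB, if_neg (Nat.succ_ne_zero k'), Nat.add_sub_cancel]
      rw [show k' + 1 + j + 1 - (k' + 1) = j + 1 by omega]
      have e1 : q ^ (2 * ((k' + 1 + j : ℕ) : ℤ) + 2)
          = q ^ (2 * (k' : ℤ) + 2) * q ^ (2 * (j : ℤ) + 2) := by
        rw [← zpow_add₀ hq]; congr 1; push_cast; ring
      have e2 : q ^ ((((k' + 1 : ℕ)) : ℤ) ^ 2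
            + 2 * (((k' + 1 + j : ℕ) : ℤ) + 1 - ((k' + 1 : ℕ) : ℤ)) + 1)
          = q ^ ((((k' + 1 : ℕ)) : ℤ) ^ 2) * q ^ (2 * (j : ℤ) + 2) * q ^ (1 : ℤ) := by
        rw [← zpow_add₀ hq, ← zpow_add₀ hq]; congr 1; push_cast; ring
      rw [e1, e2, zpow_one]
      linear_combination
        (q ^ ((((k' + 1 : ℕ)) : ℤ) ^ 2) * a (k' + 1) * pc a (n - ((k' + 1 : ℕ) : ℤ)))
            * harecz hq harec j
        + (q ^ ((((k' + 1 : ℕ)) : ℤ) ^ 2) * q ^ (2 * (j : ℤ) + 2) * pc a (n - ((k' + 1 : ℕ) : ℤ))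
            * a (j + 1)) * harecz hq harec k'
  have hlast :
      (q ^ ((((m+1) : ℕ) : ℤ) ^ 2) * a (m + 1) * pc a (n - ((m+1 : ℕ) : ℤ)) * a (m + 1 - (m + 1)))
          * (q ^ (2 * (m : ℤ) + 2) - 1) = B (m + 1) := by
    simp only [hB, if_neg (Nat.succ_ne_zero m), Nat.sub_self, Nat.add_sub_cancel]
    have e : q ^ ((((m + 1 : ℕ)) : ℤ) ^ 2 + 2 * ((m : ℤ) + 1 - ((m + 1 : ℕ) : ℤ)) + 1)
        = q ^ ((((m + 1 : ℕ)) : ℤ) ^ 2) * q ^ (1 : ℤ) := by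
      rw [← zpow_add₀ hq]; congr 1; push_cast; ring
    rw [e, zpow_one]
    linear_combination (q ^ ((((m + 1 : ℕ)) : ℤ) ^ 2) * pc a (n - ((m + 1 : ℕ) : ℤ)) * a 0)
      * harecz hq harec m
  have hBrw : ∀ j ∈ range (m + 1),
      B (j + 1) = q ^ (2 * (m : ℤ) + 2)
        * (q ^ ((j : ℤ) ^ 2) * a j * pc a ((n - 1) - j) * a (m - j)) := by
    intro j hj
    simp only [hB, if_neg (Nat.succ_ne_zero j), Nat.add_sub_cancel, Nat.succ_sub_succ]
    have e : q ^ ((((j + 1 : ℕ)) : ℤ) ^ 2 + 2 * ((m : ℤ) + 1 - ((j + 1 : ℕ) : ℤ)) + 1)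
        = q ^ (2 * (m : ℤ) + 2) * q ^ (((j : ℤ)) ^ 2) := by
      rw [← zpow_add₀ hq]; congr 1; push_cast; ring
    rw [show (n - ((j + 1 : ℕ) : ℤ)) = n - 1 - (j : ℤ) by push_cast; ring, e]
    simp only [Nat.sub_zero]
    ring
  calc pT q a (m + 1) n * (q ^ (2 * (m : ℤ) + 2) - 1)
      = ∑ k ∈ range (m + 2),
          (q ^ ((k : ℤ) ^ 2) * a k * pc a (n - k) * a (m + 1 - k))
            * (q ^ (2 * (m : ℤ) + 2) - 1) := by
        rw [pT, Finset.sum_mul]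
    _ = (∑ k ∈ range (m + 1),
          (q ^ ((k : ℤ) ^ 2) * a k * pc a (n - k) * a (m + 1 - k))
            * (q ^ (2 * (m : ℤ) + 2) - 1))
        + (q ^ ((((m+1) : ℕ) : ℤ) ^ 2) * a (m + 1) * pc a (n - ((m+1 : ℕ) : ℤ))
            * a (m + 1 - (m + 1))) * (q ^ (2 * (m : ℤ) + 2) - 1) :=
        Finset.sum_range_succ _ _
    _ = (∑ k ∈ range (m + 1),
          (q * (q ^ ((k : ℤ) ^ 2) * a k * pc a (n - k) * a (m - k)) + B k)) + B (m + 1) := by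
        rw [Finset.sum_congr rfl hterm, hlast]
    _ = q * pT q a m n + ∑ k ∈ range (m + 2), B k := by
        rw [Finset.sum_add_distrib, pT, Finset.mul_sum, Finset.sum_range_succ _ (m+1)]
        ring
    _ = q * pT q a m n + ∑ j ∈ range (m + 1), B (j + 1) := by
        rw [Finset.sum_range_succ']
        simp [hB]
    _ = q * pT q a m n + ∑ j ∈ range (m + 1),
          q ^ (2 * (m : ℤ) + 2) * (q ^ ((j : ℤ) ^ 2) * a j * pc a ((n - 1) - j) * a (m - j)) := by
        rw [Finset.sum_congr rfl hBrw]
    _ = q * pT q a m n + q ^ (2 * (m : ℤ) + 2) * pT q a m (n - 1) := by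
        simp only [pT, Finset.mul_sum]

include hq ha0 harec in
lemma pT_key : ∀ (m : ℕ) (n : ℤ), pT q a m n = q ^ (2 * (m : ℤ) * n) * a m * pc a n := by
  intro m
  induction m with
  | zero =>
    intro n
    norm_num [pT, ha0]
  | succ m ih =>
    intro n
    apply mul_right_cancel₀ (hnez hq ha0 harec m)
    rw [show ((m + 1 : ℕ) : ℤ) = (m : ℤ) + 1 by push_cast; ring] at *
    rw [pT_step hq ha0 harec m n, ih n, ih (n - 1)]
    have hc := pc_rec hq harec (n - 1)
    rw [sub_add_cancel, show (2 * (n - 1) + 2 : ℤ) = 2 * n by ring] at hc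
    have hA := harecz hq harec m
    have hW : q ^ (2 * (m : ℤ) + 2) * q ^ (2 * (m : ℤ) * (n - 1))
        = q ^ (2 * (m : ℤ) * n) * q * q := by
      rw [← zpow_add₀ hq, show (2 * (m : ℤ) + 2) + 2 * (m : ℤ) * (n - 1) = 2 * (m : ℤ) * n + 1 + 1
            by ring, zpow_add_one₀ hq, zpow_add_one₀ hq]
    have hX : q ^ (2 * ((m : ℤ) + 1) * n) = q ^ (2 * (m : ℤ) * n) * q ^ (2 * n) := by
      rw [← zpow_add₀ hq]; congr 1; ring
    rw [hX]
    linear_combination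
      (-(q ^ (2 * (m : ℤ) * n) * q ^ (2 * n) * pc a n)) * hA
      - (q * q ^ (2 * (m : ℤ) * n) * a m) * hc
      + (a m * pc a (n - 1)) * hW

end Pentagon

/-- The pentagon identity `Ψ_q(U)Ψ_q(V) = Ψ_q(V)Ψ_q(q⁻¹UV)Ψ_q(U)` in the completed
quantum torus with `UV = q²VU`, stated at the level of normally ordered coefficients.
Elements `Σ f(a,b) U^a V^b` multiply by the twisted convolution
`(f⋆g)(p) = Σ q^{-2b₁a₂} f(a₁,b₁)g(a₂,b₂)` (from `V^{b₁}U^{a₂} = q^{-2b₁a₂}U^{a₂}V^{b₁}`).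
`Ψ_q(z) = Σ_n a_n z^n` is the compact quantum dilogarithm `Π_{k≥0}(1+q^{2k+1}z)⁻¹`,
whose coefficients satisfy `a₀ = 1`, `a_{n+1}(q^{2n+2}−1) = q a_n`; note
`(q⁻¹UV)^k = q^{-k²} U^k V^k`. -/
theorem stmt16 {K : Type*} [Field K] (q : K) (hq : q ≠ 0)
    (a : ℕ → K) (ha0 : a 0 = 1)
    (harec : ∀ n : ℕ, a (n + 1) * (q ^ (2 * n + 2) - 1) = q * a n)
    (conv : (ℕ × ℕ → K) → (ℕ × ℕ → K) → (ℕ × ℕ → K))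
    (hconv : ∀ f g p, conv f g p =
      ∑ x ∈ Finset.HasAntidiagonal.antidiagonal p.1, ∑ y ∈ Finset.HasAntidiagonal.antidiagonal p.2,
        q ^ (-(2 * (y.1 : ℤ) * (x.2 : ℤ))) * f (x.1, y.1) * g (x.2, y.2))
    (fU fV fUV : ℕ × ℕ → K)
    (hfU : ∀ p, fU p = if p.2 = 0 then a p.1 else 0)
    (hfV : ∀ p, fV p = if p.1 = 0 then a p.2 else 0)
    (hfUV : ∀ p, fUV p = if p.1 = p.2 then q ^ (-((p.1 : ℤ)) ^ 2) * a p.1 else 0) :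
    conv fU fV = conv fV (conv fUV fU) := by

  -- closed form for conv fUV fU
  have hG : ∀ (M t : ℕ), conv fUV fU (M, t)
      = q ^ ((t : ℤ) ^ 2 - 2 * t * M) * a t * pc a ((M : ℤ) - t) := by
    intro M t
    rw [hconv]
    have hinner : ∀ x ∈ Finset.HasAntidiagonal.antidiagonal (M, t).1,
        (∑ y ∈ Finset.HasAntidiagonal.antidiagonal (M, t).2,
          q ^ (-(2 * (y.1 : ℤ) * (x.2 : ℤ))) * fUV (x.1, y.1) * fU (x.2, y.2))
        = q ^ (-(2 * (t : ℤ) * (x.2 : ℤ))) * fUV (x.1, t) * a x.2 := by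
      intro x hx
      rw [Finset.sum_eq_single_of_mem ((t, 0) : ℕ × ℕ) (by simp)]
      · rw [hfU]; simp
      · intro y hy hne
        have hy2 : y.2 ≠ 0 := by
          intro h
          apply hne
          have hmem := Finset.HasAntidiagonal.mem_antidiagonal.mp hy
          obtain ⟨y1, y2⟩ := y
          simp only at h hmem ⊢
          subst h
          simp at hmem ⊢
          omega
        rw [hfU]
        simp [hy2]
    rw [Finset.sum_congr rfl hinner]
    by_cases ht : t ≤ M
    · rw [Finset.sum_eq_single_of_mem ((t, M - t) : ℕ × ℕ)
        (by rw [Finset.HasAntidiagonal.mem_antidiagonal]; omega)]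
      · rw [hfUV]
        simp only [if_pos rfl]
        rw [pc, if_pos (by omega : (0:ℤ) ≤ (M : ℤ) - t),
          show ((M : ℤ) - t).toNat = M - t by omega]
        rw [show (((M - t : ℕ)) : ℤ) = (M : ℤ) - t by omega]
        rw [show ((t : ℤ) ^ 2 - 2 * t * M) = (-(2 * (t : ℤ) * ((M : ℤ) - t))) + (-(t : ℤ) ^ 2)
              by ring, zpow_add₀ hq]
        simp only [if_true]
        ring
      · intro x hx hne
        have hx1 : x.1 ≠ t := by
          intro h
          apply hne
          have hmem := Finset.HasAntidiagonal.mem_antidiagonal.mp hx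
          obtain ⟨x1, x2⟩ := x
          simp only at h hmem ⊢
          subst h
          simp at hmem ⊢
          omega
        rw [hfUV]
        simp [hx1]
    · rw [Finset.sum_eq_zero, pc_neg a (by omega : ((M : ℤ) - t) < 0), mul_zero]
      intro x hx
      have hx1 : x.1 ≠ t := by
        have hmem := Finset.HasAntidiagonal.mem_antidiagonal.mp hx
        omega
      rw [hfUV]
      simp [hx1]
  funext p
  obtain ⟨m, n⟩ := p
  -- LHS
  have hL : conv fU fV (m, n) = a m * a n := by
    rw [hconv]
    rw [Finset.sum_eq_single_of_mem ((m, 0) : ℕ × ℕ) (by simp)]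
    · rw [Finset.sum_eq_single_of_mem ((0, n) : ℕ × ℕ) (by simp)]
      · rw [hfU, hfV]; simp
      · intro y hy hne
        have hy1 : y.1 ≠ 0 := by
          intro h
          apply hne
          have hmem := Finset.HasAntidiagonal.mem_antidiagonal.mp hy
          obtain ⟨y1, y2⟩ := y
          simp only at h hmem ⊢
          subst h
          simp at hmem ⊢
          omega
        rw [hfU]
        simp [hy1]
    · intro x hx hne
      apply Finset.sum_eq_zero
      intro y hy
      have hx2 : x.2 ≠ 0 := by
        intro h
        apply hne
        have hmem := Finset.HasAntidiagonal.mem_antidiagonal.mp hx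
        obtain ⟨x1, x2⟩ := x
        simp only at h hmem ⊢
        subst h
        simp at hmem ⊢
        omega
      rw [hfV]
      simp [hx2]
  -- RHS
  have hR : conv fV (conv fUV fU) (m, n) = a m * a n := by
    rw [hconv]
    rw [Finset.sum_eq_single_of_mem ((0, m) : ℕ × ℕ) (by simp)]
    · rw [Finset.Nat.sum_antidiagonal_eq_sum_range_succ_mk]
      have hstep : ∀ j ∈ range (n + 1),
          q ^ (-(2 * ((j : ℕ) : ℤ) * (((0, m) : ℕ × ℕ).2 : ℤ))) * fV (((0,m) : ℕ×ℕ).1, j)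
            * conv fUV fU (((0,m) : ℕ×ℕ).2, n - j)
          = q ^ (-(2 * (j : ℤ) * (m : ℤ))) * a j
            * (q ^ (((n - j : ℕ) : ℤ) ^ 2 - 2 * ((n - j : ℕ) : ℤ) * m) * a (n - j)
                * pc a ((m : ℤ) - ((n - j : ℕ) : ℤ))) := by
        intro j hj
        rw [hG, hfV]
        simp
      rw [Finset.sum_congr rfl hstep]
      rw [← Finset.sum_range_reflect]
      have hterm : ∀ k ∈ range (n + 1),
          q ^ (-(2 * (((n + 1 - 1 - k : ℕ)) : ℤ) * (m : ℤ))) * a (n + 1 - 1 - k)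
            * (q ^ (((n - (n + 1 - 1 - k) : ℕ) : ℤ) ^ 2
                  - 2 * ((n - (n + 1 - 1 - k) : ℕ) : ℤ) * m) * a (n - (n + 1 - 1 - k))
                * pc a ((m : ℤ) - ((n - (n + 1 - 1 - k) : ℕ) : ℤ)))
          = q ^ (-(2 * (n : ℤ) * m)) *
              (q ^ ((k : ℤ) ^ 2) * a k * pc a ((m : ℤ) - k) * a (n - k)) := by
        intro k hk
        have hk' : k ≤ n := by
          have := Finset.mem_range.mp hk; omega
        rw [show n + 1 - 1 - k = n - k by omega, show n - (n - k) = k by omega,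
            show (((n - k : ℕ)) : ℤ) = (n : ℤ) - k by omega]
        have e3 : q ^ (-(2 * ((n : ℤ) - k) * (m : ℤ))) * q ^ ((k : ℤ) ^ 2 - 2 * (k : ℤ) * m)
            = q ^ (-(2 * (n : ℤ) * m)) * q ^ ((k : ℤ) ^ 2) := by
          rw [← zpow_add₀ hq, ← zpow_add₀ hq]; congr 1; ring
        linear_combination (a (n - k) * a k * pc a ((m : ℤ) - k)) * e3
      rw [Finset.sum_congr rfl hterm, ← Finset.mul_sum]
      have : (∑ k ∈ range (n + 1), q ^ ((k : ℤ) ^ 2) * a k * pc a ((m : ℤ) - k) * a (n - k))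
          = pT q a n ((m : ℤ)) := rfl
      rw [this, pT_key hq ha0 harec n (m : ℤ), pc_natCast, ← mul_assoc, ← mul_assoc,
        ← zpow_add₀ hq, show (-(2 * (n : ℤ) * m) + 2 * (n : ℤ) * m) = 0 by ring, zpow_zero,
        one_mul]
      ring
    · intro x hx hne
      apply Finset.sum_eq_zero
      intro y hy
      have hx1 : x.1 ≠ 0 := by
        intro h
        apply hne
        have hmem := Finset.HasAntidiagonal.mem_antidiagonal.mp hx
        obtain ⟨x1, x2⟩ := x
        simp only at h hmem ⊢
        subst h
        simp at hmem ⊢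
        omega
      rw [hfV]
      simp [hx1]
  rw [hL, hR]
end
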